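/- For every integer N ≥ 0, the constant term (the coefficient of X⁰Y⁰Z⁰) of the Laurent polynomial (X + X⁻¹ + Y + Y⁻¹ + Z + Z⁻¹)^{2N} in ℤ[X^{±1}, Y^{±1}, Z^{±1}] equals Σ_{k+l+m=N, k,l,m ≥ 0} (2N)! / ((k!)²·(l!)²·(m!)²), and the constant term of (X + X⁻¹ + Y + Y⁻¹ + Z + Z⁻¹)^{2N+1} equals 0. -/

import Mathlib

open scoped Nat

/-- The Laurent polynomial `X + X⁻¹ + Y + Y⁻¹ + Z + Z⁻¹` in
`ℤ[X^{±1},Y^{±1},Z^{±1}]`, realized as the group algebra `ℤ[ℤ³]`. -/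
noncomputable def hexLaurent : AddMonoidAlgebra ℤ (ℤ × ℤ × ℤ) :=
  AddMonoidAlgebra.single (1, 0, 0) 1 + AddMonoidAlgebra.single (-1, 0, 0) 1 +
  AddMonoidAlgebra.single (0, 1, 0) 1 + AddMonoidAlgebra.single (0, -1, 0) 1 +
  AddMonoidAlgebra.single (0, 0, 1) 1 + AddMonoidAlgebra.single (0, 0, -1) 1

noncomputable def uu : AddMonoidAlgebra ℤ ℤ :=
  AddMonoidAlgebra.single 1 1 + AddMonoidAlgebra.single (-1) 1

lemma uu_pow_apply (n : ℕ) :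
    (uu ^ n).coeff 0 = ∑ t ∈ Finset.range (n+1), if (2*t : ℤ) = n then (n.choose t : ℤ) else 0 := by
  rw [uu, add_pow]
  rw [AddMonoidAlgebra.coeff_sum, Finsupp.finset_sum_apply]
  refine Finset.sum_congr rfl fun t ht => ?_
  rw [AddMonoidAlgebra.single_pow, AddMonoidAlgebra.single_pow,
    AddMonoidAlgebra.natCast_def, AddMonoidAlgebra.single_mul_single,
    AddMonoidAlgebra.single_mul_single]
  simp only [one_pow, one_mul, mul_one, add_zero, smul_eq_mul, mul_neg, mul_one]
  rw [AddMonoidAlgebra.coeff_single, Finsupp.single_apply]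
  have ht' : t ≤ n := Nat.lt_succ_iff.mp (Finset.mem_range.mp ht)
  have : ((t:ℤ) + -(n - t : ℕ) = 0) ↔ ((2*t : ℤ) = n) := by
    rw [Nat.cast_sub ht']; omega
  split_ifs with h1 h2 h2 <;> simp_all

lemma uu_pow_even (m : ℕ) : (uu ^ (2*m)).coeff 0 = ((2*m).choose m : ℤ) := by
  rw [uu_pow_apply, Finset.sum_eq_single m]
  · simp
  · intro t ht hne
    have : ¬ ((2*t : ℤ) = ((2*m : ℕ) : ℤ)) := by push_cast; omega
    rw [if_neg this]
  · intro h; exact absurd (Finset.mem_range.mpr (by omega)) h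

lemma uu_pow_zero_of_odd {k : ℕ} (h : ¬ 2 ∣ k) : (uu ^ k).coeff 0 = 0 := by
  rw [uu_pow_apply]
  refine Finset.sum_eq_zero fun t ht => ?_
  have : ¬ ((2*t : ℤ) = (k : ℤ)) := by omega
  simp [this]

noncomputable def phi1 : AddMonoidAlgebra ℤ ℤ →+* AddMonoidAlgebra ℤ (ℤ × ℤ × ℤ) :=
  AddMonoidAlgebra.mapDomainRingHom ℤ (AddMonoidHom.inl ℤ (ℤ × ℤ))
noncomputable def phi2 : AddMonoidAlgebra ℤ ℤ →+* AddMonoidAlgebra ℤ (ℤ × ℤ × ℤ) :=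
  AddMonoidAlgebra.mapDomainRingHom ℤ ((AddMonoidHom.inr ℤ (ℤ × ℤ)).comp (AddMonoidHom.inl ℤ ℤ))
noncomputable def phi3 : AddMonoidAlgebra ℤ ℤ →+* AddMonoidAlgebra ℤ (ℤ × ℤ × ℤ) :=
  AddMonoidAlgebra.mapDomainRingHom ℤ ((AddMonoidHom.inr ℤ (ℤ × ℤ)).comp (AddMonoidHom.inr ℤ ℤ))

lemma phi1_single (a : ℤ) (b : ℤ) : phi1 (AddMonoidAlgebra.single a b) = AddMonoidAlgebra.single (a, 0, 0) b :=
  AddMonoidAlgebra.mapDomain_single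
lemma phi2_single (a : ℤ) (b : ℤ) : phi2 (AddMonoidAlgebra.single a b) = AddMonoidAlgebra.single (0, a, 0) b :=
  AddMonoidAlgebra.mapDomain_single
lemma phi3_single (a : ℤ) (b : ℤ) : phi3 (AddMonoidAlgebra.single a b) = AddMonoidAlgebra.single (0, 0, a) b :=
  AddMonoidAlgebra.mapDomain_single

lemma triple_apply (p q r : AddMonoidAlgebra ℤ ℤ) (x y z : ℤ) :
    ((phi1 p) * (phi2 q) * (phi3 r)).coeff (x, y, z) = p.coeff x * q.coeff y * r.coeff z := by
  have hAB : ∀ A B : AddMonoidAlgebra ℤ (ℤ × ℤ × ℤ), (A + B).coeff (x, y, z) = A.coeff (x, y, z) + B.coeff (x, y, z) :=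
    fun _ _ => rfl
  induction p using AddMonoidAlgebra.induction_linear with
  | zero => simp
  | add f g hf hg =>
      rw [map_add, add_mul, add_mul, hAB, hf, hg, AddMonoidAlgebra.coeff_add, Finsupp.add_apply, add_mul, add_mul]
  | single a b =>
    induction q using AddMonoidAlgebra.induction_linear with
    | zero => simp
    | add f g hf hg =>
        rw [map_add, mul_add, add_mul, hAB, hf, hg, AddMonoidAlgebra.coeff_add, Finsupp.add_apply]; ring
    | single c d =>
      induction r using AddMonoidAlgebra.induction_linear with
      | zero => simp
      | add f g hf hg =>
          rw [map_add, mul_add, hAB, hf, hg, AddMonoidAlgebra.coeff_add, Finsupp.add_apply]; ring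
      | single e f =>
        rw [phi1_single, phi2_single, phi3_single, AddMonoidAlgebra.single_mul_single,
          AddMonoidAlgebra.single_mul_single]
        simp only [Prod.mk_add_mk, add_zero, zero_add]
        simp only [AddMonoidAlgebra.coeff_single, Finsupp.single_apply, Prod.mk.injEq]
        split_ifs <;> simp_all

lemma hex_eq : hexLaurent = phi1 uu + phi2 uu + phi3 uu := by
  rw [hexLaurent, uu, map_add, map_add, map_add, phi1_single, phi1_single, phi2_single,
    phi2_single, phi3_single, phi3_single]
  abel

lemma hex_pow_apply (n : ℕ) :
    (hexLaurent ^ n).coeff (0, 0, 0) = ∑ j ∈ Finset.range (n+1), ∑ i ∈ Finset.range (j+1),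
      ((n.choose j : ℤ) * (j.choose i : ℤ)) *
        ((uu ^ i).coeff 0 * (uu ^ (j-i)).coeff 0 * (uu ^ (n-j)).coeff 0) := by
  rw [hex_eq, add_pow, AddMonoidAlgebra.coeff_sum, Finsupp.finset_sum_apply]
  refine Finset.sum_congr rfl fun j hj => ?_
  rw [add_pow, Finset.sum_mul, Finset.sum_mul, AddMonoidAlgebra.coeff_sum, Finsupp.finset_sum_apply]
  refine Finset.sum_congr rfl fun i hi => ?_
  have e : (phi1 uu ^ i * phi2 uu ^ (j-i) * ((j.choose i : ℕ) : AddMonoidAlgebra ℤ (ℤ × ℤ × ℤ)))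
        * phi3 uu ^ (n-j) * ((n.choose j : ℕ) : AddMonoidAlgebra ℤ (ℤ × ℤ × ℤ))
      = phi1 (uu ^ i) * phi2 (uu ^ (j-i)) * phi3 (uu ^ (n-j)) *
        (((j.choose i * n.choose j : ℕ) : AddMonoidAlgebra ℤ (ℤ × ℤ × ℤ))) := by
    rw [map_pow, map_pow, map_pow, Nat.cast_mul]; ring
  rw [e, AddMonoidAlgebra.natCast_def, AddMonoidAlgebra.coeff_mul_single_zero, triple_apply]
  push_cast
  ring

lemma sum_range_even (n : ℕ) (h : ℕ → ℚ) (hzero : ∀ j, j ≤ 2*n → ¬ 2 ∣ j → h j = 0) :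
    ∑ j ∈ Finset.range (2*n+1), h j = ∑ s ∈ Finset.range (n+1), h (2*s) := by
  rw [← Finset.sum_image (f := h) (g := fun s => 2*s)
    (by intro a _ b _ hab; dsimp only at hab; omega)]
  refine (Finset.sum_subset ?_ ?_).symm
  · intro j hj
    simp only [Finset.mem_image, Finset.mem_range] at hj ⊢
    omega
  · intro j hj hnot
    simp only [Finset.mem_image, Finset.mem_range] at hj hnot
    refine hzero j (by omega) ?_
    rintro ⟨c, rfl⟩
    exact hnot ⟨c, by omega, rfl⟩

lemma rhs_eq (N : ℕ) (g : ℕ → ℕ → ℕ → ℚ) :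
    ∑ p ∈ Finset.Nat.antidiagonalTuple 3 N, g (p 0) (p 1) (p 2)
      = ∑ s ∈ Finset.range (N+1), ∑ k ∈ Finset.range (s+1), g k (s-k) (N-s) := by
  rw [Finset.sum_sigma' (Finset.range (N+1)) (fun s => Finset.range (s+1))
    (fun s k => g k (s-k) (N-s))]
  refine (Finset.sum_nbij' (i := fun p => (⟨p 0 + p 1, p 0⟩ : (_ : ℕ) × ℕ))
    (j := fun q => ![q.2, q.1 - q.2, N - q.1]) ?_ ?_ ?_ ?_ ?_)
  · intro p hp
    rw [Finset.Nat.mem_antidiagonalTuple, Fin.sum_univ_three] at hp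
    simp only [Finset.mem_sigma, Finset.mem_range]
    omega
  · intro q hq
    simp only [Finset.mem_sigma, Finset.mem_range] at hq
    rw [Finset.Nat.mem_antidiagonalTuple, Fin.sum_univ_three]
    simp only [Matrix.cons_val_zero, Matrix.cons_val_one, Matrix.head_cons,
      Matrix.cons_val_two, Matrix.tail_cons]
    omega
  · intro p hp
    rw [Finset.Nat.mem_antidiagonalTuple, Fin.sum_univ_three] at hp
    funext i
    fin_cases i <;> simp <;> omega
  · rintro ⟨s, k⟩ hq
    simp only [Finset.mem_sigma, Finset.mem_range] at hq
    simp only [Matrix.cons_val_zero, Matrix.cons_val_one, Matrix.head_cons]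
    rw [show k + (s - k) = s from by omega]
  · intro p hp
    rw [Finset.Nat.mem_antidiagonalTuple, Fin.sum_univ_three] at hp
    have h1 : p 0 + p 1 - p 0 = p 1 := by omega
    have h2 : N - (p 0 + p 1) = p 2 := by omega
    rw [h1, h2]

lemma term_eval (N s k : ℕ) (hs : s ≤ N) (hk : k ≤ s) :
    ((2*N).choose (2*s) : ℚ) * ((2*s).choose (2*k) : ℚ) *
      (((2*k).choose k : ℚ) * ((2*(s-k)).choose (s-k) : ℚ) * ((2*(N-s)).choose (N-s) : ℚ))
    = ((2*N)! : ℚ) / ((k ! : ℚ) ^ 2 * ((s-k)! : ℚ) ^ 2 * ((N-s)! : ℚ) ^ 2) := by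
  have e1 : 2*N - 2*s = 2*(N-s) := by omega
  have e2 : 2*s - 2*k = 2*(s-k) := by omega
  have e3 : 2*k - k = k := by omega
  have e4 : 2*(s-k) - (s-k) = s-k := by omega
  have e5 : 2*(N-s) - (N-s) = N-s := by omega
  rw [Nat.cast_choose ℚ (by omega : 2*s ≤ 2*N), Nat.cast_choose ℚ (by omega : 2*k ≤ 2*s),
    Nat.cast_choose ℚ (by omega : k ≤ 2*k), Nat.cast_choose ℚ (by omega : s-k ≤ 2*(s-k)),
    Nat.cast_choose ℚ (by omega : N-s ≤ 2*(N-s)), e1, e2, e3, e4, e5]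
  push_cast
  rw [div_mul_div_comm, div_mul_div_comm, div_mul_div_comm, div_mul_div_comm]
  rw [div_eq_div_iff (by positivity) (by positivity)]
  ring

theorem stmt_12 (N : ℕ) :
    (((hexLaurent ^ (2 * N)).coeff (0, 0, 0) : ℤ) : ℚ) =
      ∑ p ∈ Finset.Nat.antidiagonalTuple 3 N,
        ((2 * N)! : ℚ) / (((p 0)! ^ 2 * (p 1)! ^ 2 * (p 2)! ^ 2 : ℕ) : ℚ) ∧
    (hexLaurent ^ (2 * N + 1)).coeff (0, 0, 0) = 0 := by
  constructor
  · rw [hex_pow_apply,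
      rhs_eq N (fun a b c => ((2*N)! : ℚ) / ((a ! ^ 2 * b ! ^ 2 * c ! ^ 2 : ℕ) : ℚ))]
    push_cast
    rw [sum_range_even N _ ?hz]
    case hz =>
      intro j hj hodd
      refine Finset.sum_eq_zero fun i hi => ?_
      have hi' := Finset.mem_range.mp hi
      rcases em (2 ∣ i) with h1 | h1
      · have h2 : ¬ 2 ∣ (j - i) := by omega
        rw [uu_pow_zero_of_odd h2]; push_cast; ring
      · rw [uu_pow_zero_of_odd h1]; push_cast; ring
    refine Finset.sum_congr rfl fun s hs => ?_
    have hs' : s ≤ N := by have := Finset.mem_range.mp hs; omega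
    rw [sum_range_even s _ ?hz2]
    case hz2 =>
      intro i hi hodd
      rw [uu_pow_zero_of_odd hodd]; push_cast; ring
    refine Finset.sum_congr rfl fun k hk => ?_
    have hk' : k ≤ s := by have := Finset.mem_range.mp hk; omega
    have e2 : 2*s - 2*k = 2*(s-k) := by omega
    have e1 : 2*N - 2*s = 2*(N-s) := by omega
    rw [e1, e2, uu_pow_even, uu_pow_even, uu_pow_even, ← term_eval N s k hs' hk']
    push_cast
    ring
  · rw [hex_pow_apply]
    refine Finset.sum_eq_zero fun j hj => Finset.sum_eq_zero fun i hi => ?_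
    have hj' := Finset.mem_range.mp hj
    have hi' := Finset.mem_range.mp hi
    rcases em (2 ∣ i) with h1 | h1
    · rcases em (2 ∣ (j - i)) with h2 | h2
      · have h3 : ¬ 2 ∣ (2*N+1 - j) := by omega
        rw [uu_pow_zero_of_odd h3]; ring
      · rw [uu_pow_zero_of_odd h2]; ring
    · rw [uu_pow_zero_of_odd h1]; ring
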